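/- arXiv:1406.3048 — 3 statements merged into one kernel-verified Lean document; each statement's English description precedes it below -/
import Mathlib

section
/- For p ∈ ℤ₊ⁿ, the Lebesgue volume of Ω_p^n = {z ∈ ℂⁿ : Σ_j |z_j|^{2p_j} < 1} equals πⁿ · ∏_{j=1}^n Γ(1/p_j) / ( (∏_{j=1}^n p_j) · Γ(Σ_{j=1}^n 1/p_j + 1) ). -/
open MeasureTheory Real
open scoped ENNReal

private lemma integrable_exp_neg_pow_cx {k : ℕ} (hk : 0 < k) :
    Integrable (fun z : ℂ => rexp (-‖z‖ ^ (2 * k))) := by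
  have h2 : Integrable (fun x : ℝ => rexp (-x ^ 2)) := by
    simpa using integrable_exp_neg_mul_sq (one_pos)
  have hprod : Integrable (fun q : ℝ × ℝ => rexp (-q.1 ^ 2) * rexp (-q.2 ^ 2)) :=
    h2.mul_prod h2
  have hC : Integrable (fun z : ℂ => rexp (-z.re ^ 2) * rexp (-z.im ^ 2)) :=
    (Complex.volume_preserving_equiv_real_prod.integrable_comp_emb
      Complex.measurableEquivRealProd.measurableEmbedding).2 hprod
  refine (hC.const_mul (rexp 1)).mono' ?_ ?_
  · exact (Real.continuous_exp.comp (continuous_norm.pow _).neg).aestronglyMeasurable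
  · refine Filter.Eventually.of_forall fun z => ?_
    rw [Real.norm_of_nonneg (Real.exp_nonneg _), ← Real.exp_add, ← Real.exp_add]
    apply Real.exp_le_exp.2
    have hz : z.re ^ 2 + z.im ^ 2 = ‖z‖ ^ 2 := by
      rw [Complex.sq_norm, Complex.normSq_apply]; ring
    have h2k : ‖z‖ ^ 2 ≤ 1 + ‖z‖ ^ (2 * k) := by
      rcases le_total (‖z‖) 1 with h | h
      · have h1 : ‖z‖ ^ 2 ≤ 1 := pow_le_one₀ (norm_nonneg _) h
        have h2 : (0:ℝ) ≤ ‖z‖ ^ (2 * k) := by positivity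
        linarith
      · have : ‖z‖ ^ 2 ≤ ‖z‖ ^ (2 * k) := pow_le_pow_right₀ h (by omega)
        linarith
    nlinarith [h2k, hz]

private lemma integral_exp_neg_pow_cx {k : ℕ} (hk : 0 < k) :
    ∫ z : ℂ, rexp (-‖z‖ ^ (2 * k)) = π * Real.Gamma (1 / (k : ℝ) + 1) := by
  have hk0 : ((k : ℝ)) ≠ 0 := Nat.cast_ne_zero.2 hk.ne'
  have h1 : (1:ℝ) ≤ ((2 * k : ℕ) : ℝ) := by
    have : (1 : ℕ) ≤ 2 * k := by omega
    exact_mod_cast this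
  have := Complex.integral_exp_neg_rpow h1
  simp_rw [Real.rpow_natCast] at this
  rw [this]
  congr 2
  push_cast
  field_simp

private lemma vol_scale (n : ℕ) (p : Fin n → ℕ) (hp : ∀ j, 0 < p j) {t : ℝ} (ht : 0 < t) :
    volume {z : Fin n → ℂ | ∑ j, ‖z j‖ ^ (2 * p j) < t} =
      ENNReal.ofReal (t ^ (∑ j, (1:ℝ) / p j)) *
        volume {z : Fin n → ℂ | ∑ j, ‖z j‖ ^ (2 * p j) < 1} := by
  have hpj : ∀ j, ((p j : ℝ)) ≠ 0 := fun j => Nat.cast_ne_zero.2 (hp j).ne'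
  set c : Fin n → ℝ := fun j => t ^ (-(1 / (2 * (p j : ℝ)))) with hc
  have hc0 : ∀ j, 0 < c j := fun j => rpow_pos_of_pos ht _
  set T : (Fin n → ℂ) → (Fin n → ℂ) := fun z j => c j • z j with hT
  have hTm : Measurable T := measurable_pi_lambda _ fun j => (measurable_const_smul (c j)).comp (measurable_pi_apply j)
  have hgm : ∀ (u : ℝ), MeasurableSet {z : Fin n → ℂ | ∑ j, ‖z j‖ ^ (2 * p j) < u} := by
    intro u
    have hcont : Continuous fun z : Fin n → ℂ => ∑ j, ‖z j‖ ^ (2 * p j) :=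
      continuous_finset_sum _ fun j _ => ((continuous_apply j).norm.pow _)
    exact measurableSet_lt hcont.measurable measurable_const
  have key : ∀ j, (c j) ^ (2 * p j) = t⁻¹ := by
    intro j
    rw [hc, ← Real.rpow_natCast (t ^ (-(1 / (2 * (p j : ℝ))))), ← Real.rpow_mul ht.le]
    rw [show -(1 / (2 * (p j : ℝ))) * ((2 * p j : ℕ) : ℝ) = -1 by push_cast; field_simp; rw [div_self (hpj j)]]
    exact Real.rpow_neg_one t
  have hcsq : ∀ j, ((c j) ^ 2)⁻¹ = t ^ ((1:ℝ) / p j) := by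
    intro j
    rw [hc, ← Real.rpow_natCast (t ^ (-(1 / (2 * (p j : ℝ))))) 2, ← Real.rpow_mul ht.le,
      ← Real.rpow_neg_one (t ^ (-(1 / (2 * (p j : ℝ))) * ((2:ℕ):ℝ))), ← Real.rpow_mul ht.le]
    congr 1
    push_cast
    ring
  set a : Fin n → ℝ≥0∞ := fun j => ENNReal.ofReal (t ^ ((1:ℝ) / p j)) with ha
  have ha0 : ∀ j, a j ≠ 0 := fun j => (ENNReal.ofReal_pos.2 (rpow_pos_of_pos ht _)).ne'
  have hatop : ∀ j, a j ≠ ⊤ := fun j => ENNReal.ofReal_ne_top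
  set A : ℝ≥0∞ := ∏ j, a j with hA
  have hA0 : A ≠ 0 := Finset.prod_ne_zero_iff.2 fun j _ => ha0 j
  have hAtop : A ≠ ⊤ := (ENNReal.prod_lt_top fun j _ => (hatop j).lt_top).ne
  have hmap : Measure.map T volume = A • volume := by
    have hpi : (A⁻¹ • Measure.map T volume) = Measure.pi (fun _ : Fin n => (volume : Measure ℂ)) := by
      refine (Measure.pi_eq fun s hs => ?_).symm
      rw [Measure.smul_apply, Measure.map_apply hTm (MeasurableSet.univ_pi hs)]
      have hpre : T ⁻¹' Set.pi Set.univ s = Set.pi Set.univ fun j => (c j • ·) ⁻¹' s j := by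
        ext z; simp [hT, Set.mem_pi]
      rw [hpre, volume_pi_pi]
      have hcoord : ∀ j, volume ((c j • ·) ⁻¹' s j) = a j * volume (s j) := by
        intro j
        rw [Measure.addHaar_preimage_smul volume (hc0 j).ne' (s j)]
        congr 1
        rw [Complex.finrank_real_complex, abs_of_pos (by positivity), hcsq j, ha]
      rw [Finset.prod_congr rfl fun j _ => hcoord j, Finset.prod_mul_distrib,
        smul_eq_mul, ← mul_assoc, ← hA, ENNReal.inv_mul_cancel hA0 hAtop, one_mul]
    have h2 := congrArg (fun m => A • m) hpi
    simp only [smul_smul, ENNReal.mul_inv_cancel hA0 hAtop, one_smul] at h2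
    rw [h2, ← volume_pi]
  have hset : {z : Fin n → ℂ | ∑ j, ‖z j‖ ^ (2 * p j) < t} =
      T ⁻¹' {z : Fin n → ℂ | ∑ j, ‖z j‖ ^ (2 * p j) < 1} := by
    ext z
    simp only [Set.mem_preimage, Set.mem_setOf_eq, hT]
    have hterm : ∀ j, ‖c j • z j‖ ^ (2 * p j) = t⁻¹ * ‖z j‖ ^ (2 * p j) := by
      intro j
      rw [norm_smul, Real.norm_of_nonneg (hc0 j).le, mul_pow, key j]
    rw [Finset.sum_congr rfl fun j _ => hterm j, ← Finset.mul_sum]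
    rw [inv_mul_lt_iff₀ ht, mul_one]
  have hAval : A = ENNReal.ofReal (t ^ (∑ j, (1:ℝ) / p j)) := by
    rw [hA, ha, ← ENNReal.ofReal_prod_of_nonneg (fun j _ => (rpow_pos_of_pos ht _).le),
      ← Real.rpow_sum_of_pos ht]
  rw [hset, ← Measure.map_apply hTm (hgm 1), hmap, Measure.smul_apply, smul_eq_mul, hAval]

/-- The volume of `Ω_p^n = {z ∈ ℂⁿ : Σ |z_j|^{2p_j} < 1}` equals
`πⁿ ∏ Γ(1/p_j) / ((∏ p_j) Γ(Σ 1/p_j + 1))`. -/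
theorem volume_Omega (n : ℕ) (p : Fin n → ℕ) (hp : ∀ j, 0 < p j) :
    (volume {z : Fin n → ℂ | ∑ j, ‖z j‖ ^ (2 * p j) < 1}).toReal =
      π ^ n * (∏ j, Real.Gamma (1 / p j)) /
        ((∏ j, (p j : ℝ)) * Real.Gamma ((∑ j, (1 : ℝ) / p j) + 1)) := by
  classical
  have hpj : ∀ j, ((p j : ℝ)) ≠ 0 := fun j => Nat.cast_ne_zero.2 (hp j).ne'
  have habs : {z : Fin n → ℂ | ∑ j, ‖z j‖ ^ (2 * p j) < 1} =
      {z : Fin n → ℂ | ∑ j, ‖z j‖ ^ (2 * p j) < 1} := by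
    rfl
  set S : ℝ := ∑ j, (1:ℝ) / p j with hS
  have hS0 : 0 ≤ S := Finset.sum_nonneg fun j _ => by positivity
  set g : (Fin n → ℂ) → ℝ := fun z => ∑ j, ‖z j‖ ^ (2 * p j) with hg
  have hgcont : Continuous g := continuous_finset_sum _ fun j _ => (continuous_apply j).norm.pow _
  have hgnn : ∀ z, 0 ≤ g z := fun z => Finset.sum_nonneg fun j _ => by positivity
  have hgm : Measurable g := hgcont.measurable
  set V : ℝ≥0∞ := volume {z : Fin n → ℂ | g z < 1} with hV
  have hexpand : (fun z : Fin n → ℂ => rexp (-g z)) =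
      fun z => ∏ j, rexp (-‖z j‖ ^ (2 * p j)) := by
    funext z
    rw [hg, ← Real.exp_sum]
    congr 1
    rw [← Finset.sum_neg_distrib]
  have hIntegrable : Integrable (fun z : Fin n → ℂ => rexp (-g z)) := by
    rw [hexpand]
    exact Integrable.fintype_prod_dep (𝕜 := ℝ)
      (f := fun j (w : ℂ) => rexp (-‖w‖ ^ (2 * p j))) fun j => integrable_exp_neg_pow_cx (hp j)
  have hprodval : ∫ z : Fin n → ℂ, rexp (-g z) = ∏ j, (π * Real.Gamma (1 / (p j : ℝ) + 1)) := by
    rw [hexpand, volume_pi, integral_fintype_prod_eq_prod (𝕜 := ℝ)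
      (f := fun j (w : ℂ) => rexp (-‖w‖ ^ (2 * p j)))]
    exact Finset.prod_congr rfl fun j _ => integral_exp_neg_pow_cx (hp j)
  set F : ℝ≥0∞ := ∫⁻ z : Fin n → ℂ, ENNReal.ofReal (rexp (-g z)) with hF
  have hF1 : F = ENNReal.ofReal (∏ j, (π * Real.Gamma (1 / (p j : ℝ) + 1))) := by
    rw [hF, ← ofReal_integral_eq_lintegral_ofReal hIntegrable
      (Filter.Eventually.of_forall fun z => Real.exp_nonneg _), hprodval]
  have hind : ∀ z : Fin n → ℂ, ENNReal.ofReal (rexp (-g z)) =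
      ∫⁻ t in Set.Ioi (0:ℝ), (Set.Ioi (g z)).indicator (fun t => ENNReal.ofReal (rexp (-t))) t := by
    intro z
    rw [setLIntegral_indicator measurableSet_Ioi,
      Set.inter_eq_self_of_subset_left (Set.Ioi_subset_Ioi (hgnn z))]
    have hint : IntegrableOn (fun t : ℝ => rexp (-t)) (Set.Ioi (g z)) := by
      simpa using exp_neg_integrableOn_Ioi (g z) one_pos
    rw [← ofReal_integral_eq_lintegral_ofReal hint
      (Filter.Eventually.of_forall fun t => Real.exp_nonneg _), integral_exp_neg_Ioi]
  have hswap : F = ∫⁻ t in Set.Ioi (0:ℝ),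
      ENNReal.ofReal (rexp (-t)) * volume {z : Fin n → ℂ | g z < t} := by
    rw [hF]
    simp_rw [hind]
    rw [lintegral_lintegral_swap]
    · refine setLIntegral_congr_fun measurableSet_Ioi
        (fun t ht => ?_)
      have hz : ∀ z : Fin n → ℂ,
          (Set.Ioi (g z)).indicator (fun t => ENNReal.ofReal (rexp (-t))) t =
          {z : Fin n → ℂ | g z < t}.indicator (fun _ => ENNReal.ofReal (rexp (-t))) z := by
        intro z
        by_cases h : g z < t <;> simp [Set.indicator, Set.mem_Ioi, h]
      simp_rw [hz]
      rw [lintegral_indicator (measurableSet_lt hgm measurable_const), setLIntegral_const]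
    · have heq : (Function.uncurry fun (z : Fin n → ℂ) (t : ℝ) =>
          (Set.Ioi (g z)).indicator (fun t => ENNReal.ofReal (rexp (-t))) t) =
          Set.indicator {q : (Fin n → ℂ) × ℝ | g q.1 < q.2}
            (fun q => ENNReal.ofReal (rexp (-q.2))) := by
        funext q
        by_cases h : g q.1 < q.2 <;>
          simp [Function.uncurry, Set.indicator, Set.mem_Ioi, h]
      rw [heq]
      exact (Measurable.indicator
        ((Real.measurable_exp.comp measurable_snd.neg).ennreal_ofReal)
        (measurableSet_lt (hgm.comp measurable_fst) measurable_snd)).aemeasurable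
  have hswap2 : F = (∫⁻ t in Set.Ioi (0:ℝ), ENNReal.ofReal (rexp (-t) * t ^ S)) * V := by
    rw [hswap]
    rw [show (∫⁻ t in Set.Ioi (0:ℝ), ENNReal.ofReal (rexp (-t)) * volume {z : Fin n → ℂ | g z < t})
        = ∫⁻ t in Set.Ioi (0:ℝ), ENNReal.ofReal (rexp (-t) * t ^ S) * V from
      setLIntegral_congr_fun measurableSet_Ioi (fun t ht => by
        rw [hg] at *
        rw [vol_scale n p hp ht, ← mul_assoc,
          ← ENNReal.ofReal_mul (Real.exp_nonneg _)])]
    rw [lintegral_mul_const'' _ ((Measurable.ennreal_ofReal (by fun_prop)).aemeasurable)]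
  have hGamma : (∫⁻ t in Set.Ioi (0:ℝ), ENNReal.ofReal (rexp (-t) * t ^ S)) =
      ENNReal.ofReal (Real.Gamma (S + 1)) := by
    rw [Real.Gamma_eq_integral (by linarith : (0:ℝ) < S + 1)]
    rw [ofReal_integral_eq_lintegral_ofReal]
    · simp [add_sub_cancel_right]
    · have h := Real.GammaIntegral_convergent (by linarith : (0:ℝ) < S + 1)
      simp only [add_sub_cancel_right] at h ⊢
      exact h
    · refine (ae_restrict_iff' measurableSet_Ioi).2 (ae_of_all _ fun t ht => ?_)
      have ht' : (0:ℝ) < t := ht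
      positivity
  have hΓpos : 0 < Real.Gamma (S + 1) := Real.Gamma_pos_of_pos (by linarith)
  have hcomb : ENNReal.ofReal (Real.Gamma (S + 1)) * V =
      ENNReal.ofReal (∏ j, (π * Real.Gamma (1 / (p j : ℝ) + 1))) := by
    rw [← hGamma, ← hswap2, hF1]
  have hVval : V = ENNReal.ofReal
      ((∏ j, (π * Real.Gamma (1 / (p j : ℝ) + 1))) / Real.Gamma (S + 1)) := by
    rw [ENNReal.ofReal_div_of_pos hΓpos, ← hcomb, mul_comm, mul_div_assoc,
      ENNReal.div_self (ENNReal.ofReal_pos.2 hΓpos).ne' ENNReal.ofReal_ne_top, mul_one]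
  have hfinal : (∏ j, (π * Real.Gamma (1 / (p j : ℝ) + 1))) / Real.Gamma (S + 1) =
      π ^ n * (∏ j, Real.Gamma (1 / (p j : ℝ))) / ((∏ j, (p j : ℝ)) * Real.Gamma (S + 1)) := by
    have h1 : ∀ j, Real.Gamma (1 / (p j : ℝ) + 1) = 1 / (p j : ℝ) * Real.Gamma (1 / (p j : ℝ)) :=
      fun j => Real.Gamma_add_one (one_div_ne_zero (hpj j))
    rw [Finset.prod_mul_distrib, Finset.prod_const, Finset.card_univ, Fintype.card_fin,
      Finset.prod_congr rfl fun j _ => h1 j, Finset.prod_mul_distrib]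
    have hprodp : (0:ℝ) < ∏ j, (p j : ℝ) :=
      Finset.prod_pos fun j _ => by exact_mod_cast hp j
    simp_rw [one_div]
    rw [Finset.prod_inv_distrib]
    field_simp
  rw [hVval, ENNReal.toReal_ofReal (by positivity), hfinal]
end

section
/- For p ∈ ℤ₊ⁿ, the un-normalized hypersurface measure of 𝕊_p^n equals S(1) = 2πⁿ ∏_j Γ(1/p_j) / ( (∏_j p_j) · Γ(Σ_j 1/p_j) ). -/
open MeasureTheory Real Set
open scoped ENNReal NNReal

namespace HypAux

noncomputable def gfun {n : ℕ} (p : Fin n → ℕ) (z : Fin n → ℂ) : ℝ :=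
  ∑ j, ‖z j‖ ^ (2 * p j)

lemma continuous_gfun {n : ℕ} (p : Fin n → ℕ) : Continuous (gfun p) := by
  unfold gfun
  exact continuous_finset_sum _ fun j _ =>
    (continuous_norm.comp (continuous_apply j)).pow _

lemma gfun_nonneg {n : ℕ} (p : Fin n → ℕ) (z : Fin n → ℂ) : 0 ≤ gfun p z :=
  Finset.sum_nonneg fun j _ => by positivity

lemma measurableSet_gfun_lt {n : ℕ} (p : Fin n → ℕ) (t : ℝ) :
    MeasurableSet {z : Fin n → ℂ | gfun p z < t} :=
  (isOpen_lt (continuous_gfun p) continuous_const).measurableSet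

lemma pi_smul {ι : Type*} [Fintype ι] {α : ι → Type*} [∀ i, MeasurableSpace (α i)]
    (μ : ∀ i, Measure (α i)) [∀ i, SigmaFinite (μ i)] (d : ι → ℝ≥0) :
    Measure.pi (fun i => d i • μ i) = (∏ i, d i) • Measure.pi μ := by
  refine Measure.pi_eq (μ := fun i => d i • μ i) fun s hs => ?_
  simp only [Measure.smul_apply, Measure.pi_pi, smul_eq_mul, ENNReal.smul_def,
    ENNReal.coe_finset_prod]
  rw [← Finset.prod_mul_distrib]

end HypAux
namespace HypAux

lemma scaling {n : ℕ} (p : Fin n → ℕ) (hp : ∀ j, 0 < p j) {t : ℝ} (ht : 0 < t) :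
    volume {z : Fin n → ℂ | gfun p z < t}
      = ENNReal.ofReal (t ^ (∑ j, (1:ℝ)/(p j))) * volume {z : Fin n → ℂ | gfun p z < 1} := by
  have hpr : ∀ j, (0:ℝ) < p j := fun j => by exact_mod_cast hp j
  set c : Fin n → ℝ := fun j => t ^ (-(1 / (2 * (p j : ℝ)))) with hc
  have hc0 : ∀ j, 0 < c j := fun j => rpow_pos_of_pos ht _
  set T : (Fin n → ℂ) → (Fin n → ℂ) := fun z j => c j • z j with hT
  have hpre : T ⁻¹' {z | gfun p z < 1} = {z | gfun p z < t} := by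
    ext z
    simp only [Set.mem_preimage, Set.mem_setOf_eq, gfun, hT]
    have hterm : ∀ j, ‖c j • z j‖ ^ (2 * p j)
        = t⁻¹ * ‖z j‖ ^ (2 * p j) := by
      intro j
      have h1 : ‖c j • z j‖ = c j * ‖z j‖ := by
        rw [norm_smul, Real.norm_eq_abs, abs_of_pos (hc0 j)]
      rw [h1, mul_pow]
      congr 1
      rw [hc, ← Real.rpow_natCast (t ^ (-(1 / (2 * (p j : ℝ))))) (2 * p j),
        ← Real.rpow_mul ht.le]
      rw [show -(1 / (2 * (p j : ℝ))) * ((2 * p j : ℕ) : ℝ) = -1 by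
        have := (hpr j).ne'
        push_cast
        field_simp]
      exact Real.rpow_neg_one t
    rw [Finset.sum_congr rfl fun j _ => hterm j, ← Finset.mul_sum]
    rw [inv_mul_lt_iff₀ ht, mul_one]
  -- measure computation
  set d : Fin n → ℝ≥0 := fun j => ((c j ^ 2)⁻¹).toNNReal with hd
  have hmp : MeasurePreserving T (Measure.pi fun _ => volume)
      (Measure.pi fun j => d j • volume) := by
    refine measurePreserving_pi _ _ fun j => ⟨(continuous_const_smul (c j)).measurable, ?_⟩
    rw [show Measure.map (HSMul.hSMul (c j)) (volume : Measure ℂ)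
        = Measure.map (c j • ·) volume from rfl,
      Measure.map_addHaar_smul volume (hc0 j).ne']
    ext s hs
    rw [Complex.finrank_real_complex, abs_of_nonneg (by positivity : (0:ℝ) ≤ ((c j ^ 2)⁻¹))]
    rfl
  have hprod : ((∏ j, d j : ℝ≥0) : ℝ≥0∞) = ENNReal.ofReal (t ^ (∑ j, (1:ℝ)/(p j))) := by
    rw [ENNReal.coe_finset_prod]
    have hdj : ∀ j, ((d j : ℝ≥0) : ℝ≥0∞) = ENNReal.ofReal (t ^ ((1:ℝ)/(p j))) := by
      intro j
      have : (c j ^ 2)⁻¹ = t ^ ((1:ℝ)/(p j)) := by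
        rw [hc, ← Real.rpow_natCast (t ^ (-(1 / (2 * (p j : ℝ))))) 2, ← Real.rpow_mul ht.le,
          ← Real.rpow_neg ht.le]
        congr 1
        have := (hpr j).ne'
        push_cast
        field_simp
      rw [hd]
      simp [ENNReal.ofReal, this]
    rw [Finset.prod_congr rfl fun j _ => hdj j,
      ← ENNReal.ofReal_prod_of_nonneg (fun j _ => by positivity)]
    congr 1
    simp_rw [Real.rpow_def_of_pos ht, ← Real.exp_sum, ← Finset.mul_sum]
  calc volume {z : Fin n → ℂ | gfun p z < t}
      = (Measure.pi fun _ : Fin n => (volume : Measure ℂ)) (T ⁻¹' {z | gfun p z < 1}) := by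
        rw [hpre, ← volume_pi]
    _ = (Measure.pi fun j : Fin n => d j • (volume : Measure ℂ)) {z | gfun p z < 1} := by
        rw [hmp.measure_preimage (measurableSet_gfun_lt p 1).nullMeasurableSet]
    _ = ENNReal.ofReal (t ^ (∑ j, (1:ℝ)/(p j))) * volume {z : Fin n → ℂ | gfun p z < 1} := by
        rw [pi_smul, Measure.smul_apply, ENNReal.smul_def, smul_eq_mul, hprod, ← volume_pi]

end HypAux
namespace HypAux

lemma finiteV1 {n : ℕ} (p : Fin n → ℕ) (hp : ∀ j, 0 < p j) :
    volume {z : Fin n → ℂ | gfun p z < 1} ≠ ⊤ := by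
  have hsub : {z : Fin n → ℂ | gfun p z < 1}
      ⊆ Set.univ.pi fun _ => Metric.closedBall (0:ℂ) 1 := by
    intro z hz j _
    simp only [Metric.mem_closedBall, dist_zero_right]
    by_contra h
    push_neg at h
    have h1 : (1:ℝ) < ‖z j‖ ^ (2 * p j) :=
      one_lt_pow₀ h (by have := hp j; omega)
    have h2 : ‖z j‖ ^ (2 * p j) ≤ gfun p z :=
      Finset.single_le_sum (f := fun i => ‖z i‖ ^ (2 * p i))
        (fun i _ => by positivity) (Finset.mem_univ j)
    have := hz.out
    linarith
  refine ne_of_lt (lt_of_le_of_lt (measure_mono hsub) ?_)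
  rw [volume_pi, Measure.pi_pi]
  exact ENNReal.prod_lt_top fun j _ => measure_closedBall_lt_top

lemma coord_integrable {q : ℕ} (hq : 0 < q) :
    Integrable (fun w : ℂ => Real.exp (-‖w‖ ^ (2 * q)))
      ∧ (∫ w : ℂ, Real.exp (-‖w‖ ^ (2 * q))) = π * Real.Gamma (1/(q:ℝ) + 1) := by
  have hfe : (fun w : ℂ => Real.exp (-‖w‖ ^ (2 * q)))
      = fun w : ℂ => Real.exp (-‖w‖ ^ (((2 * q : ℕ)) : ℝ)) := by
    funext w
    rw [Real.rpow_natCast]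
  have h1le : (1:ℝ) ≤ ((2 * q : ℕ) : ℝ) := by exact_mod_cast (by omega : 1 ≤ 2 * q)
  have h2q : (2:ℝ) / ((2 * q : ℕ) : ℝ) = 1/(q:ℝ) := by
    have : (q:ℝ) ≠ 0 := by exact_mod_cast hq.ne'
    push_cast
    rw [div_eq_div_iff (by positivity) (by positivity)]
    ring
  have hval : (∫ w : ℂ, Real.exp (-‖w‖ ^ (2 * q))) = π * Real.Gamma (1/(q:ℝ) + 1) := by
    rw [hfe, Complex.integral_exp_neg_rpow h1le, h2q]
  refine ⟨?_, hval⟩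
  by_contra hcon
  rw [integral_undef hcon] at hval
  have : 0 < π * Real.Gamma (1/(q:ℝ) + 1) :=
    mul_pos pi_pos (Real.Gamma_pos_of_pos (by positivity))
  linarith

end HypAux
namespace HypAux

lemma V1_value {n : ℕ} (hn : 0 < n) (p : Fin n → ℕ) (hp : ∀ j, 0 < p j) :
    volume {z : Fin n → ℂ | gfun p z < 1}
      = ENNReal.ofReal (π ^ n * (∏ j, Real.Gamma (1/(p j:ℝ) + 1))
          / Real.Gamma ((∑ j, (1:ℝ)/(p j)) + 1)) := by
  have hpr : ∀ j, (0:ℝ) < p j := fun j => by exact_mod_cast hp j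
  set S := ∑ j, (1:ℝ)/(p j) with hSdef
  have hne : (Finset.univ : Finset (Fin n)).Nonempty := by
    simpa [Finset.univ_nonempty_iff] using Fin.pos_iff_nonempty.mp hn
  have hS : 0 < S := Finset.sum_pos (fun j _ => by have := hpr j; positivity) hne
  set V1 := volume {z : Fin n → ℂ | gfun p z < 1} with hV1
  set I := ∫⁻ z : Fin n → ℂ, ENNReal.ofReal (Real.exp (-(gfun p z))) with hI
  -- product evaluation
  have hprod_fun : ∀ z : Fin n → ℂ,
      Real.exp (-(gfun p z)) = ∏ j, Real.exp (-‖z j‖ ^ (2 * p j)) := by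
    intro z
    rw [gfun, ← Real.exp_sum]
    congr 1
    rw [← Finset.sum_neg_distrib]
  have hint : Integrable (fun z : Fin n → ℂ =>
      ∏ j, Real.exp (-‖z j‖ ^ (2 * p j))) :=
    Integrable.fintype_prod (𝕜 := ℝ) fun j => (coord_integrable (hp j)).1
  have hIprod : I = ENNReal.ofReal (π ^ n * ∏ j, Real.Gamma (1/(p j:ℝ) + 1)) := by
    rw [hI]
    simp_rw [hprod_fun]
    rw [← ofReal_integral_eq_lintegral_ofReal hint
      (ae_of_all _ fun z => Finset.prod_nonneg fun j _ => (Real.exp_nonneg _))]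
    rw [volume_pi, integral_fintype_prod_eq_prod (f := fun j (w : ℂ) =>
      Real.exp (-‖w‖ ^ (2 * p j)))]
    rw [Finset.prod_congr rfl fun j _ => (coord_integrable (hp j)).2]
    rw [Finset.prod_mul_distrib, Finset.prod_const, Finset.card_univ, Fintype.card_fin]
  -- layer cake
  have hlayer : I = ∫⁻ t in Ioi (0:ℝ), volume {z : Fin n → ℂ | t < Real.exp (-(gfun p z))} :=
    lintegral_eq_lintegral_meas_lt volume (ae_of_all _ fun z => Real.exp_nonneg _)
      ((Real.continuous_exp.comp (continuous_gfun p).neg).measurable.aemeasurable)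
  have hsetval : ∀ t : ℝ, 0 < t → {z : Fin n → ℂ | t < Real.exp (-(gfun p z))}
      = {z : Fin n → ℂ | gfun p z < -Real.log t} := by
    intro t ht
    ext z
    simp only [Set.mem_setOf_eq]
    rw [← Real.log_lt_iff_lt_exp ht, lt_neg]
  have hdisj : Disjoint (Ioo (0:ℝ) 1) (Ici (1:ℝ)) := by
    rw [Set.disjoint_left]
    intro a ha hb
    exact absurd hb (not_le.mpr ha.2)
  have hsplit : I = (∫⁻ t in Ioo (0:ℝ) 1, volume {z : Fin n → ℂ | t < Real.exp (-(gfun p z))})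
      + ∫⁻ t in Ici (1:ℝ), volume {z : Fin n → ℂ | t < Real.exp (-(gfun p z))} := by
    rw [hlayer, ← Ioo_union_Ici_eq_Ioi zero_lt_one, lintegral_union measurableSet_Ici hdisj]
  have hsecond : (∫⁻ t in Ici (1:ℝ),
      volume {z : Fin n → ℂ | t < Real.exp (-(gfun p z))}) = 0 := by
    rw [setLIntegral_congr_fun measurableSet_Ici (fun t (ht : t ∈ Ici (1:ℝ)) => ?_),
      lintegral_zero]
    have : {z : Fin n → ℂ | t < Real.exp (-(gfun p z))} = ∅ := by
      ext z
      simp only [Set.mem_setOf_eq, Set.mem_empty_iff_false, iff_false, not_lt]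
      refine le_trans ?_ ht
      rw [Real.exp_le_one_iff]
      simpa using gfun_nonneg p z
    rw [this, measure_empty]
  have hfirst : (∫⁻ t in Ioo (0:ℝ) 1,
      volume {z : Fin n → ℂ | t < Real.exp (-(gfun p z))})
      = (∫⁻ t in Ioo (0:ℝ) 1, ENNReal.ofReal ((-Real.log t) ^ S)) * V1 := by
    rw [← lintegral_mul_const' V1 _ (finiteV1 p hp)]
    refine setLIntegral_congr_fun measurableSet_Ioo (fun t ht => ?_)
    have hlt : 0 < -Real.log t := by
      have := Real.log_neg ht.1 ht.2
      linarith
    rw [hsetval t ht.1, scaling p hp hlt, ← hSdef, hV1]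
  -- the Gamma integral
  have himg : (fun u : ℝ => Real.exp (-u)) '' Ioi 0 = Ioo (0:ℝ) 1 := by
    ext y
    simp only [Set.mem_image, Set.mem_Ioi, Set.mem_Ioo]
    constructor
    · rintro ⟨u, hu, rfl⟩
      exact ⟨Real.exp_pos _, by rw [Real.exp_lt_one_iff]; linarith⟩
    · rintro ⟨hy0, hy1⟩
      refine ⟨-Real.log y, ?_, by rw [neg_neg, Real.exp_log hy0]⟩
      have := Real.log_neg hy0 hy1
      linarith
  have hderiv : ∀ u ∈ Ioi (0:ℝ), HasDerivWithinAt (fun u : ℝ => Real.exp (-u))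
      (-Real.exp (-u)) (Ioi 0) u := by
    intro u _
    have h := ((Real.hasDerivAt_exp (-u)).comp u (hasDerivAt_neg u))
    simpa [mul_comm, Function.comp_def] using h.hasDerivWithinAt
  have hinj : InjOn (fun u : ℝ => Real.exp (-u)) (Ioi 0) := by
    intro a _ b _ h
    have := Real.exp_injective h
    linarith [neg_injective this]
  have hint2 : IntegrableOn (fun x : ℝ => (-Real.log x) ^ S) (Ioo (0:ℝ) 1) := by
    rw [← himg, integrableOn_image_iff_integrableOn_abs_deriv_smul measurableSet_Ioi hderiv hinj]
    refine (Real.GammaIntegral_convergent (by positivity : (0:ℝ) < S + 1)).congr_fun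
      (fun u hu => ?_) measurableSet_Ioi
    simp only [abs_neg, abs_of_pos (Real.exp_pos _), Real.log_exp, neg_neg, smul_eq_mul,
      add_sub_cancel_right]
  have hJreal : (∫ x in Ioo (0:ℝ) 1, (-Real.log x) ^ S) = Real.Gamma (S + 1) := by
    rw [← himg, integral_image_eq_integral_abs_deriv_smul measurableSet_Ioi hderiv hinj,
      Real.Gamma_eq_integral (by positivity : (0:ℝ) < S + 1)]
    refine setIntegral_congr_fun measurableSet_Ioi fun u hu => ?_
    simp only [abs_neg, abs_of_pos (Real.exp_pos _), Real.log_exp, neg_neg, smul_eq_mul,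
      add_sub_cancel_right]
  have hJ : (∫⁻ t in Ioo (0:ℝ) 1, ENNReal.ofReal ((-Real.log t) ^ S))
      = ENNReal.ofReal (Real.Gamma (S + 1)) := by
    rw [← hJreal]
    refine (ofReal_integral_eq_lintegral_ofReal hint2 ?_).symm
    refine (ae_restrict_iff' measurableSet_Ioo).mpr (ae_of_all _ fun x hx => ?_)
    have hlx : 0 < -Real.log x := by linarith [Real.log_neg hx.1 hx.2]
    positivity
  -- combine
  have hkey : ENNReal.ofReal (Real.Gamma (S + 1)) * V1
      = ENNReal.ofReal (π ^ n * ∏ j, Real.Gamma (1/(p j:ℝ) + 1)) := by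
    rw [← hIprod, hsplit, hsecond, add_zero, hfirst, hJ]
  have hGpos : 0 < Real.Gamma (S + 1) := Real.Gamma_pos_of_pos (by positivity)
  refine (ENNReal.mul_right_inj (a := ENNReal.ofReal (Real.Gamma (S + 1)))
    (by simp [hGpos]) ENNReal.ofReal_ne_top).mp ?_
  rw [hkey, ← ENNReal.ofReal_mul hGpos.le]
  congr 1
  field_simp

end HypAux
/-- The un-normalized hypersurface measure `S(1)` of `𝕊_p^n`, defined through
`V(r) = ∫_0^r S(x) dx` (so that `S(1) = V'(1)` where `V(r)` is the Lebesgue volume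
of `Ω_p^n(r)`), equals `2πⁿ ∏ Γ(1/p_j) / ((∏ p_j) Γ(Σ 1/p_j))`. -/
theorem hypersurface_measure_sphere (n : ℕ) (hn : 0 < n) (p : Fin n → ℕ)
    (hp : ∀ j, 0 < p j) :
    HasDerivAt
      (fun r : ℝ =>
        (volume {z : Fin n → ℂ | ∑ j, ‖z j‖ ^ (2 * p j) < r ^ 2}).toReal)
      (2 * π ^ n * (∏ j, Real.Gamma (1 / p j)) /
        ((∏ j, (p j : ℝ)) * Real.Gamma (∑ j, (1 : ℝ) / p j))) 1 := by
  have hpr : ∀ j, (0:ℝ) < p j := fun j => by exact_mod_cast hp j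
  set S := ∑ j, (1:ℝ)/(p j : ℝ) with hSdef
  have hne : (Finset.univ : Finset (Fin n)).Nonempty := by
    simpa [Finset.univ_nonempty_iff] using Fin.pos_iff_nonempty.mp hn
  have hS : 0 < S := Finset.sum_pos (fun j _ => by have := hpr j; positivity) hne
  have hGpos : 0 < Real.Gamma (S + 1) := Real.Gamma_pos_of_pos (by positivity)
  have hGprodpos : 0 < ∏ j, Real.Gamma (1/(p j:ℝ) + 1) :=
    Finset.prod_pos fun j _ => Real.Gamma_pos_of_pos (by have := hpr j; positivity)
  set C := π ^ n * (∏ j, Real.Gamma (1/(p j:ℝ) + 1)) / Real.Gamma (S + 1) with hC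
  have hC0 : 0 ≤ C := by positivity
  have hF : HasDerivAt (fun r : ℝ => ((r ^ 2) ^ S) * C) (2 * S * C) 1 := by
    have h1 : HasDerivAt (fun r : ℝ => r ^ 2) 2 1 := by
      simpa using hasDerivAt_pow 2 (1:ℝ)
    have h2 := (h1.rpow_const (p := S) (Or.inl (by norm_num))).mul_const C
    rw [show 2 * S * C = 2 * S * (1 ^ 2 : ℝ) ^ (S - 1) * C by norm_num]
    exact h2
  have heq : (fun r : ℝ =>
      (volume {z : Fin n → ℂ | ∑ j, ‖z j‖ ^ (2 * p j) < r ^ 2}).toReal)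
      =ᶠ[nhds 1] fun r : ℝ => ((r ^ 2) ^ S) * C := by
    filter_upwards [eventually_gt_nhds (zero_lt_one : (0:ℝ) < 1)] with r hr
    have ht : (0:ℝ) < r ^ 2 := by positivity
    have : {z : Fin n → ℂ | ∑ j, ‖z j‖ ^ (2 * p j) < r ^ 2}
        = {z : Fin n → ℂ | HypAux.gfun p z < r ^ 2} := rfl
    rw [this, HypAux.scaling p hp ht, HypAux.V1_value hn p hp, ← hSdef, ← hC,
      ← ENNReal.ofReal_mul (by positivity), ENNReal.toReal_ofReal (by positivity)]
  have hval : 2 * S * C = 2 * π ^ n * (∏ j, Real.Gamma (1 / (p j:ℝ))) /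
      ((∏ j, (p j : ℝ)) * Real.Gamma S) := by
    have hΓ1 : (∏ j, Real.Gamma (1/(p j:ℝ) + 1))
        = (∏ j, (p j:ℝ))⁻¹ * ∏ j, Real.Gamma (1/(p j:ℝ)) := by
      rw [Finset.prod_congr rfl fun j _ =>
        Real.Gamma_add_one (by have := hpr j; positivity : (1/(p j:ℝ)) ≠ 0)]
      rw [Finset.prod_mul_distrib]
      congr 1
      rw [← Finset.prod_inv_distrib]
      exact Finset.prod_congr rfl fun j _ => one_div _
    have hΓs : Real.Gamma (S + 1) = S * Real.Gamma S := Real.Gamma_add_one hS.ne'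
    have hGS : 0 < Real.Gamma S := Real.Gamma_pos_of_pos hS
    have hPp : 0 < ∏ j, (p j : ℝ) := Finset.prod_pos fun j _ => hpr j
    rw [hC, hΓ1, hΓs]
    field_simp
  have final := hF.congr_of_eventuallyEq heq
  rw [hval] at final
  exact final
end

section
/- Suppose τ ∈ 𝕋ⁿ satisfies ∏_{t=1}^n τ_t^{Λ(p)_t(ν_t − μ_t)} = 1 for all ν, μ ∈ ℕⁿ satisfying: ν ⊥ μ, Σ_{t ∈ block j} Λ(p)_t(ν_t−μ_t) = 0 for all j, and ν supported on indices > k̂_{j−1}+h_j within no block while μ supported on the first h_j indices of each block (the (k,h)-support condition). Then τ^{lcm(p)} ∈ 𝕋^s_k, i.e., the coordinates of (τ_t^{lcm(p)})_t are constant on each block. -/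
/-- If `τ ∈ 𝕋ⁿ` satisfies `∏_t τ_t^{Λ(p)_t (ν_t - μ_t)} = 1` for all orthogonal
`ν, μ ∈ ℕⁿ` satisfying the block-sum condition `Σ_{t ∈ block j} Λ(p)_t(ν_t-μ_t) = 0`
and the `(k,h)`-support condition (`ν` vanishes past the first `h_j` indices of
each block, `μ` vanishes on the first `h_j` indices), then `τ^{lcm(p)}` is
constant on each block. -/
theorem invariance_implies_block_constant (s : ℕ) (k : Fin s → ℕ) (hk : ∀ j, 0 < k j)
    (p : ((j : Fin s) × Fin (k j)) → ℕ) (hp : ∀ t, 0 < p t)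
    (h : Fin s → ℕ) (hh : ∀ j, 1 ≤ h j ∧ h j ≤ k j - 1)
    (τ : ((j : Fin s) × Fin (k j)) → Circle)
    (hτ : ∀ ν μ : ((j : Fin s) × Fin (k j)) → ℕ,
      (∀ t, ν t * μ t = 0) →
      (∀ j : Fin s, ∑ t : Fin (k j),
        (((Finset.univ.lcm p) / p ⟨j, t⟩ : ℕ) : ℤ) * ((ν ⟨j, t⟩ : ℤ) - μ ⟨j, t⟩) = 0) →
      (∀ (j : Fin s) (i : Fin (k j)), h j ≤ (i : ℕ) → ν ⟨j, i⟩ = 0) →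
      (∀ (j : Fin s) (i : Fin (k j)), (i : ℕ) < h j → μ ⟨j, i⟩ = 0) →
      ∏ t, τ t ^ ((((Finset.univ.lcm p) / p t : ℕ) : ℤ) * ((ν t : ℤ) - μ t)) = 1) :
    ∀ (j : Fin s) (i₁ i₂ : Fin (k j)),
      τ ⟨j, i₁⟩ ^ (Finset.univ.lcm p) = τ ⟨j, i₂⟩ ^ (Finset.univ.lcm p) := by
  classical
  set L := Finset.univ.lcm p with hL
  have hdvd : ∀ t, p t ∣ L := fun t => Finset.dvd_lcm (Finset.mem_univ t)
  have key : ∀ (j : Fin s) (i₁ i₂ : Fin (k j)), (i₁ : ℕ) < h j → h j ≤ (i₂ : ℕ) →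
      τ ⟨j, i₁⟩ ^ L = τ ⟨j, i₂⟩ ^ L := by
    intro j i₁ i₂ h1 h2
    set A : ((j : Fin s) × Fin (k j)) := ⟨j, i₁⟩ with hA
    set B : ((j : Fin s) × Fin (k j)) := ⟨j, i₂⟩ with hB
    have hi12 : i₁ ≠ i₂ := by
      intro e; rw [e] at h1; omega
    have hAB : A ≠ B := by
      intro e
      injection e with e1 e2
      exact hi12 e2
    set ν : ((j : Fin s) × Fin (k j)) → ℕ := fun t => if t = A then p A else 0 with hν
    set μ : ((j : Fin s) × Fin (k j)) → ℕ := fun t => if t = B then p B else 0 with hμ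
    have hνA : ν A = p A := by simp [hν]
    have hμB : μ B = p B := by simp [hμ]
    have hν0 : ∀ x, x ≠ A → ν x = 0 := by intro x hx; simp [hν, hx]
    have hμ0 : ∀ x, x ≠ B → μ x = 0 := by intro x hx; simp [hμ, hx]
    have horth : ∀ t, ν t * μ t = 0 := by
      intro t
      by_cases ht : t = A
      · rw [hμ0 t (ht ▸ hAB), mul_zero]
      · rw [hν0 t ht, zero_mul]
    have hsum : ∀ j' : Fin s, ∑ t : Fin (k j'),
        ((L / p ⟨j', t⟩ : ℕ) : ℤ) * ((ν ⟨j', t⟩ : ℤ) - μ ⟨j', t⟩) = 0 := by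
      intro j'
      by_cases hj : j' = j
      · subst hj
        have hνt : ∀ t : Fin (k j'), (ν ⟨j', t⟩ : ℤ) = if t = i₁ then (p A : ℤ) else 0 := by
          intro t
          by_cases ht : t = i₁
          · subst ht; simp [hνA, hA]; exact hνA
          · rw [hν0 ⟨j', t⟩ (by intro e; injection e with e1 e2; exact ht e2)]
            simp [ht]
        have hμt : ∀ t : Fin (k j'), (μ ⟨j', t⟩ : ℤ) = if t = i₂ then (p B : ℤ) else 0 := by
          intro t
          by_cases ht : t = i₂
          · subst ht; simp [hμB, hB]; exact hμB
          · rw [hμ0 ⟨j', t⟩ (by intro e; injection e with e1 e2; exact ht e2)]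
            simp [ht]
        simp only [hνt, hμt, mul_sub, mul_ite, mul_zero]
        rw [Finset.sum_sub_distrib, Finset.sum_ite_eq' Finset.univ i₁,
          Finset.sum_ite_eq' Finset.univ i₂]
        simp only [Finset.mem_univ, if_true]
        rw [← hA, ← hB, ← Nat.cast_mul, ← Nat.cast_mul, Nat.div_mul_cancel (hdvd A),
          Nat.div_mul_cancel (hdvd B), sub_self]
      · have : ∀ t : Fin (k j'), ((ν ⟨j', t⟩ : ℤ) - μ ⟨j', t⟩) = 0 := by
          intro t
          rw [hν0 ⟨j', t⟩ (by intro e; injection e with e1 e2; exact hj e1),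
            hμ0 ⟨j', t⟩ (by intro e; injection e with e1 e2; exact hj e1)]
          simp
        simp [this]
    have hνsupp : ∀ (j' : Fin s) (i : Fin (k j')), h j' ≤ (i : ℕ) → ν ⟨j', i⟩ = 0 := by
      intro j' i hi
      apply hν0
      intro e
      injection e with e1 e2
      subst e1
      rw [eq_of_heq e2] at hi
      omega
    have hμsupp : ∀ (j' : Fin s) (i : Fin (k j')), (i : ℕ) < h j' → μ ⟨j', i⟩ = 0 := by
      intro j' i hi
      apply hμ0
      intro e
      injection e with e1 e2
      subst e1
      rw [eq_of_heq e2] at hi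
      omega
    have hprod := hτ ν μ horth hsum hνsupp hμsupp
    rw [← Finset.prod_subset (Finset.subset_univ ({A, B} : Finset _))
      (fun x _ hx => by
        have hxA : x ≠ A := fun e => hx (by simp [e])
        have hxB : x ≠ B := fun e => hx (by simp [e])
        rw [hν0 x hxA, hμ0 x hxB]
        simp)] at hprod
    rw [Finset.prod_pair hAB, hνA, hμ0 A hAB, hμB, hν0 B (Ne.symm hAB)] at hprod
    rw [Nat.cast_zero, sub_zero, zero_sub, mul_neg, ← Nat.cast_mul, ← Nat.cast_mul,
      Nat.div_mul_cancel (hdvd A), Nat.div_mul_cancel (hdvd B)] at hprod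
    have : τ A ^ (L : ℤ) = τ B ^ (L : ℤ) := by
      rw [zpow_neg] at hprod
      exact (mul_inv_eq_one.mp hprod)
    simpa [zpow_natCast] using this
  intro j i₁ i₂
  have hjk : h j < k j := by have := hh j; have := hk j; omega
  have h0 : (0 : ℕ) < h j := (hh j).1
  set a : Fin (k j) := ⟨0, hk j⟩ with ha
  set b : Fin (k j) := ⟨h j, hjk⟩ with hb
  rcases lt_or_ge (i₁ : ℕ) (h j) with c1 | c1 <;> rcases lt_or_ge (i₂ : ℕ) (h j) with c2 | c2
  · exact (key j i₁ b c1 (le_refl _)).trans (key j i₂ b c2 (le_refl _)).symm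
  · exact key j i₁ i₂ c1 c2
  · exact (key j i₂ i₁ c2 c1).symm
  · exact ((key j a i₁ h0 c1).symm).trans (key j a i₂ h0 c2)
end
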